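/- Let $F, G$ be CDFs on $[a,b]$ and $\beta > 0$. Then $\left|\frac{1}{\beta}\log\int e^{\beta x}dF(x) - \frac{1}{\beta}\log\int e^{\beta x}dG(x)\right| \le e^{\beta(b-a)}\, W_1(F,G)$, where $W_1(F,G) = \int_a^b |F(x)-G(x)|dx$ is the Wasserstein-1 distance. -/

import Mathlib

open MeasureTheory

lemma aux_exp_integral (β : ℝ) (hβ : 0 < β) (y b : ℝ) :
    ∫ x in y..b, β * Real.exp (β * x) = Real.exp (β * b) - Real.exp (β * y) := by
  have : ∀ x : ℝ, HasDerivAt (fun t => Real.exp (β * t)) (β * Real.exp (β * x)) x := by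
    intro x
    have := (Real.hasDerivAt_exp (β * x)).comp x ((hasDerivAt_id x).const_mul β)
    simpa [mul_comm, Function.comp_def] using this
  exact intervalIntegral.integral_eq_sub_of_hasDerivAt (fun x _ => this x)
    (Continuous.intervalIntegrable (by continuity) _ _)

lemma aux_key (a b β : ℝ) (hab : a ≤ b) (hβ : 0 < β)
    (μ : Measure ℝ) [IsProbabilityMeasure μ] (hμ : μ (Set.Icc a b) = 1) :
    ∫ y, Real.exp (β * y) ∂μ =
      Real.exp (β * b) - ∫ x in a..b, β * Real.exp (β * x) * (μ (Set.Iic x)).toReal := by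
  set g : ℝ → ℝ → ℝ := fun y x => Set.indicator (Set.Icc y b) (fun x => β * Real.exp (β * x)) x
    with hg
  have haeμ : ∀ᵐ y ∂μ, y ∈ Set.Icc a b := by
    rw [ae_iff]
    exact (prob_compl_eq_zero_iff measurableSet_Icc).2 hμ
  haveI : IsFiniteMeasure (volume.restrict (Set.Icc a b)) :=
    ⟨by simp [Measure.restrict_apply_univ, Real.volume_Icc]⟩
  -- measurability of uncurried g
  have hmeas : Measurable (Function.uncurry g) := by
    have : Function.uncurry g =
        Set.indicator {p : ℝ × ℝ | p.1 ≤ p.2 ∧ p.2 ≤ b} (fun p => β * Real.exp (β * p.2)) := by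
      funext p
      simp [Function.uncurry, hg, Set.indicator, Set.mem_Icc]
    rw [this]
    exact Measurable.indicator (by fun_prop)
      ((measurableSet_le measurable_fst measurable_snd).inter
        (measurableSet_le measurable_snd measurable_const))
  have hbound : ∀ y x : ℝ, ‖g y x‖ ≤ β * Real.exp (β * b) := by
    intro y x
    simp only [hg]
    by_cases h : x ∈ Set.Icc y b
    · rw [Set.indicator_of_mem h, Real.norm_eq_abs, abs_of_nonneg (by positivity)]
      have := Real.exp_le_exp.2 (mul_le_mul_of_nonneg_left h.2 hβ.le)
      nlinarith
    · simp [Set.indicator_of_notMem h, le_of_lt (by positivity : (0:ℝ) < β * Real.exp (β * b))]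
  have hint : Integrable (Function.uncurry g) (μ.prod (volume.restrict (Set.Icc a b))) :=
    Integrable.mono' (integrable_const (β * Real.exp (β * b)))
      hmeas.aestronglyMeasurable (ae_of_all _ fun p => hbound p.1 p.2)
  -- pointwise inner integral over x
  have hinner : ∀ y ∈ Set.Icc a b,
      ∫ x in Set.Icc a b, g y x = Real.exp (β * b) - Real.exp (β * y) := by
    intro y hy
    simp only [hg]
    rw [setIntegral_indicator measurableSet_Icc]
    have hset : Set.Icc a b ∩ Set.Icc y b = Set.Icc y b := by
      rw [Set.Icc_inter_Icc, max_eq_right hy.1, min_self]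
    rw [hset, integral_Icc_eq_integral_Ioc, ← intervalIntegral.integral_of_le hy.2]
    exact aux_exp_integral β hβ y b
  calc ∫ y, Real.exp (β * y) ∂μ
      = ∫ y, (Real.exp (β * b) - ∫ x in Set.Icc a b, g y x) ∂μ := by
        refine integral_congr_ae ?_
        filter_upwards [haeμ] with y hy
        rw [hinner y hy]; ring
    _ = (∫ _, Real.exp (β * b) ∂μ) - ∫ y, (∫ x in Set.Icc a b, g y x) ∂μ := by
        exact integral_sub (integrable_const _) hint.integral_prod_left
    _ = Real.exp (β * b) - ∫ x in Set.Icc a b, (∫ y, g y x ∂μ) := by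
        rw [integral_const, probReal_univ, one_smul,
          integral_integral_swap hint]
    _ = Real.exp (β * b) - ∫ x in Set.Icc a b, (μ (Set.Iic x)).toReal • (β * Real.exp (β * x)) := by
        congr 1
        refine setIntegral_congr_fun measurableSet_Icc (fun x hx => ?_)
        have hgx : (fun y => g y x) =
            Set.indicator (Set.Iic x) (fun _ => β * Real.exp (β * x)) := by
          funext y
          simp only [hg, Set.indicator, Set.mem_Icc, Set.mem_Iic]
          by_cases h : y ≤ x
          · simp [h, hx.2]
          · simp [h]
        rw [hgx, integral_indicator_const _ measurableSet_Iic]; rfl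
    _ = Real.exp (β * b) - ∫ x in a..b, β * Real.exp (β * x) * (μ (Set.Iic x)).toReal := by
        rw [intervalIntegral.integral_of_le hab, ← integral_Icc_eq_integral_Ioc]
        congr 1
        refine setIntegral_congr_fun measurableSet_Icc (fun x _ => ?_)
        simp [smul_eq_mul]; ring

lemma aux_log (c x y : ℝ) (hc : 0 < c) (hx : c ≤ x) (hy : c ≤ y) :
    |Real.log x - Real.log y| ≤ |x - y| / c := by
  have key : ∀ u v : ℝ, c ≤ u → c ≤ v → Real.log u - Real.log v ≤ |u - v| / c := by
    intro u v hu hv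
    have hv0 : 0 < v := lt_of_lt_of_le hc hv
    have hu0 : 0 < u := lt_of_lt_of_le hc hu
    have h1 : Real.log u - Real.log v = Real.log (u / v) := by
      rw [Real.log_div hu0.ne' hv0.ne']
    have h2 : Real.log (u / v) ≤ u / v - 1 := Real.log_le_sub_one_of_pos (by positivity)
    have h3 : u / v - 1 = (u - v) / v := by field_simp
    have h4 : (u - v) / v ≤ |u - v| / c := by
      apply div_le_div₀ (abs_nonneg _) (le_abs_self _) hc hv
    linarith
  rw [abs_sub_le_iff]
  refine ⟨key x y hx hy, ?_⟩
  rw [abs_sub_comm]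
  exact key y x hy hx

theorem stmt_10 (a b β : ℝ) (hab : a < b) (hβ : 0 < β)
    (μ ν : Measure ℝ) [IsProbabilityMeasure μ] [IsProbabilityMeasure ν]
    (hμ : μ (Set.Icc a b) = 1) (hν : ν (Set.Icc a b) = 1) :
    |(1 / β) * Real.log (∫ x, Real.exp (β * x) ∂μ) -
        (1 / β) * Real.log (∫ x, Real.exp (β * x) ∂ν)| ≤
      Real.exp (β * (b - a)) *
        ∫ x in a..b, |(μ (Set.Iic x)).toReal - (ν (Set.Iic x)).toReal| := by
  have hab' := hab.le
  set F : ℝ → ℝ := fun x => (μ (Set.Iic x)).toReal with hF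
  set G : ℝ → ℝ := fun x => (ν (Set.Iic x)).toReal with hG
  set Iμ : ℝ := ∫ x, Real.exp (β * x) ∂μ with hIμ
  set Iν : ℝ := ∫ x, Real.exp (β * x) ∂ν with hIν
  set W : ℝ := ∫ x in a..b, |F x - G x| with hW
  have hFmono : Monotone F := fun x y hxy =>
    ENNReal.toReal_mono (measure_ne_top μ _) (measure_mono (Set.Iic_subset_Iic.2 hxy))
  have hGmono : Monotone G := fun x y hxy =>
    ENNReal.toReal_mono (measure_ne_top ν _) (measure_mono (Set.Iic_subset_Iic.2 hxy))
  have hFi : IntervalIntegrable F volume a b := hFmono.intervalIntegrable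
  have hGi : IntervalIntegrable G volume a b := hGmono.intervalIntegrable
  have hcont : Continuous (fun x : ℝ => β * Real.exp (β * x)) := by continuity
  have hFi' : IntervalIntegrable (fun x => β * Real.exp (β * x) * F x) volume a b :=
    hFi.continuousOn_mul hcont.continuousOn
  have hGi' : IntervalIntegrable (fun x => β * Real.exp (β * x) * G x) volume a b :=
    hGi.continuousOn_mul hcont.continuousOn
  have hWi : IntervalIntegrable (fun x => |F x - G x|) volume a b := (hFi.sub hGi).abs
  -- a.e. membership
  have haeμ : ∀ᵐ y ∂μ, y ∈ Set.Icc a b := by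
    rw [ae_iff]; exact (prob_compl_eq_zero_iff measurableSet_Icc).2 hμ
  have haeν : ∀ᵐ y ∂ν, y ∈ Set.Icc a b := by
    rw [ae_iff]; exact (prob_compl_eq_zero_iff measurableSet_Icc).2 hν
  -- difference formula
  have hdiff : Iμ - Iν = ∫ x in a..b, (β * Real.exp (β * x) * G x - β * Real.exp (β * x) * F x) := by
    rw [hIμ, hIν, aux_key a b β hab' hβ μ hμ, aux_key a b β hab' hβ ν hν,
      intervalIntegral.integral_sub hGi' hFi']
    ring
  -- bound on difference
  have habs : |Iμ - Iν| ≤ β * Real.exp (β * b) * W := by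
    rw [hdiff]
    calc |∫ x in a..b, (β * Real.exp (β * x) * G x - β * Real.exp (β * x) * F x)|
        ≤ ∫ x in a..b, |β * Real.exp (β * x) * G x - β * Real.exp (β * x) * F x| :=
          intervalIntegral.abs_integral_le_integral_abs hab'
      _ ≤ ∫ x in a..b, β * Real.exp (β * b) * |F x - G x| := by
          refine intervalIntegral.integral_mono_on hab' (hGi'.sub hFi').abs
            (hWi.const_mul _) (fun x hx => ?_)
          have h1 : β * Real.exp (β * x) * G x - β * Real.exp (β * x) * F x
              = β * Real.exp (β * x) * (G x - F x) := by ring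
          rw [h1, abs_mul, abs_of_nonneg (by positivity : (0:ℝ) ≤ β * Real.exp (β * x)),
            abs_sub_comm]
          have h2 : Real.exp (β * x) ≤ Real.exp (β * b) :=
            Real.exp_le_exp.2 (mul_le_mul_of_nonneg_left hx.2 hβ.le)
          have h3 : (0:ℝ) ≤ |F x - G x| := abs_nonneg _
          exact mul_le_mul_of_nonneg_right (mul_le_mul_of_nonneg_left h2 hβ.le) h3
      _ = β * Real.exp (β * b) * W := by rw [hW, ← intervalIntegral.integral_const_mul]
  -- lower bounds on the integrals
  have hintμ : Integrable (fun y => Real.exp (β * y)) μ := by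
    refine Integrable.mono' (integrable_const (Real.exp (β * b)))
      (Continuous.aestronglyMeasurable (by continuity)) ?_
    filter_upwards [haeμ] with y hy
    rw [Real.norm_eq_abs, abs_of_pos (Real.exp_pos _)]
    exact Real.exp_le_exp.2 (mul_le_mul_of_nonneg_left hy.2 hβ.le)
  have hintν : Integrable (fun y => Real.exp (β * y)) ν := by
    refine Integrable.mono' (integrable_const (Real.exp (β * b)))
      (Continuous.aestronglyMeasurable (by continuity)) ?_
    filter_upwards [haeν] with y hy
    rw [Real.norm_eq_abs, abs_of_pos (Real.exp_pos _)]
    exact Real.exp_le_exp.2 (mul_le_mul_of_nonneg_left hy.2 hβ.le)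
  have hlbμ : Real.exp (β * a) ≤ Iμ := by
    have : ∫ _, Real.exp (β * a) ∂μ ≤ ∫ y, Real.exp (β * y) ∂μ := by
      refine integral_mono_ae (integrable_const _) hintμ ?_
      filter_upwards [haeμ] with y hy
      exact Real.exp_le_exp.2 (mul_le_mul_of_nonneg_left hy.1 hβ.le)
    simpa using this
  have hlbν : Real.exp (β * a) ≤ Iν := by
    have : ∫ _, Real.exp (β * a) ∂ν ≤ ∫ y, Real.exp (β * y) ∂ν := by
      refine integral_mono_ae (integrable_const _) hintν ?_
      filter_upwards [haeν] with y hy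
      exact Real.exp_le_exp.2 (mul_le_mul_of_nonneg_left hy.1 hβ.le)
    simpa using this
  have hlog : |Real.log Iμ - Real.log Iν| ≤ |Iμ - Iν| / Real.exp (β * a) :=
    aux_log (Real.exp (β * a)) Iμ Iν (Real.exp_pos _) hlbμ hlbν
  have hW0 : 0 ≤ W := by
    rw [hW]
    exact intervalIntegral.integral_nonneg hab' (fun x _ => abs_nonneg _)
  rw [← mul_sub, abs_mul, abs_of_pos (by positivity : (0:ℝ) < 1 / β)]
  calc (1 / β) * |Real.log Iμ - Real.log Iν|
      ≤ (1 / β) * (|Iμ - Iν| / Real.exp (β * a)) := by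
        exact mul_le_mul_of_nonneg_left hlog (by positivity)
    _ ≤ (1 / β) * ((β * Real.exp (β * b) * W) / Real.exp (β * a)) := by
        gcongr
    _ = Real.exp (β * (b - a)) * W := by
        have h : Real.exp (β * (b - a)) = Real.exp (β * b) / Real.exp (β * a) := by
          rw [← Real.exp_sub]; ring_nf
        rw [h]
        field_simp
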